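/- Assume μ1 ≤ μ2 and ρ̂1 < ρ < ρ̂2, and set t* = √(2(1−ρ)/(μ1² + μ2² − 2ρ·μ1·μ2)). Then inf_{(t,s)∈(0,∞)²} g(t,s) = (2/(1+ρ))·(μ1 + μ2 + 2/t*), and this infimum is attained at the unique point (t*, t*) on the diagonal. -/

import Mathlib

open Matrix

/-- Covariance matrix `Σ_{ts}` of `(X₁(t), X₂(s))` for a correlated Brownian motion with
correlation `ρ`. -/
noncomputable def covM (ρ t s : ℝ) : Matrix (Fin 2) (Fin 2) ℝ :=
  !![t, ρ * min t s; ρ * min t s, s]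

/-- `g(t,s) = inf { (x,y) Σ_{ts}⁻¹ (x,y)ᵀ : x ≥ 1 + μ₁ t, y ≥ 1 + μ₂ s }`. -/
noncomputable def gfun (ρ μ1 μ2 t s : ℝ) : ℝ :=
  sInf {v : ℝ | ∃ x y : ℝ, 1 + μ1 * t ≤ x ∧ 1 + μ2 * s ≤ y ∧
    v = ![x, y] ⬝ᵥ ((covM ρ t s)⁻¹ *ᵥ ![x, y])}

lemma detpos (ρ t s : ℝ) (ht : 0 < t) (hs : 0 < s) (hρ : ρ^2 < 1) :
    0 < t*s - ρ^2*(min t s)^2 := by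
  have hm : 0 < min t s := lt_min ht hs
  have hmm : min t s * min t s ≤ t * s :=
    mul_le_mul (min_le_left t s) (min_le_right t s) hm.le ht.le
  have h1 : ρ^2*(min t s)^2 < 1*(min t s)^2 :=
    mul_lt_mul_of_pos_right hρ (by positivity)
  nlinarith [h1]

lemma quadform (ρ t s : ℝ) (ht : 0 < t) (hs : 0 < s) (hρ : ρ^2 < 1) (x y : ℝ) :
    ![x, y] ⬝ᵥ ((covM ρ t s)⁻¹ *ᵥ ![x, y]) =
      (s*x^2 - 2*ρ*(min t s)*x*y + t*y^2) / (t*s - ρ^2*(min t s)^2) := by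
  have hD : 0 < t*s - ρ^2*(min t s)^2 := detpos ρ t s ht hs hρ
  have hdet : (covM ρ t s).det = t*s - ρ^2*(min t s)^2 := by
    simp [covM, Matrix.det_fin_two_of]; ring
  rw [Matrix.inv_def, hdet]
  simp [covM, Matrix.adjugate_fin_two, Matrix.mulVec, dotProduct,
    Fin.sum_univ_two, Ring.inverse_eq_inv']
  field_simp
  ring

set_option maxHeartbeats 2000000 in
lemma core (ρ μ1 μ2 T : ℝ) (hμ1 : 0 < μ1) (hμ12 : μ1 ≤ μ2) (hρ1 : -1 < ρ) (hρ2 : ρ < 1)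
    (hT : 0 < T) (hT2 : (μ1^2 + μ2^2 - 2*ρ*μ1*μ2) * T^2 = 2*(1-ρ))
    (hu1p : 0 < (1-ρ) + (μ1-ρ*μ2)*T)
    (hu2lt : (1-ρ) + (μ2-ρ*μ1)*T < 2*(1-ρ^2))
    (t s : ℝ) (ht : 0 < t) (hs : 0 < s) :
    ∃ W : ℝ,
      2/(1+ρ) * (μ1+μ2+2/T) ≤ W ∧
      (¬(t = T ∧ s = T) → 2/(1+ρ) * (μ1+μ2+2/T) < W) ∧
      ∀ x y : ℝ, 1 + μ1*t ≤ x → 1 + μ2*s ≤ y →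
        W ≤ (s*x^2 - 2*ρ*(min t s)*x*y + t*y^2) / (t*s - ρ^2*(min t s)^2) := by
  set u1 : ℝ := (1-ρ) + (μ1-ρ*μ2)*T with hu1
  clear_value u1
  set u2 : ℝ := (1-ρ) + (μ2-ρ*μ1)*T with hu2
  clear_value u2
  have h1ρ : 0 < 1 - ρ := by linarith
  have h1ρ' : 0 < 1 + ρ := by linarith
  have h1ρ2 : 0 < 1 - ρ^2 := by nlinarith
  have hμ2 : 0 < μ2 := lt_of_lt_of_le hμ1 hμ12
  have hu12 : u1 ≤ u2 := by
    rw [hu1, hu2]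
    nlinarith [mul_nonneg (mul_nonneg (sub_nonneg.mpr hμ12) h1ρ'.le) hT.le]
  have hu2p : 0 < u2 := lt_of_lt_of_le hu1p hu12
  have hu1lt : u1 < 2*(1-ρ^2) := lt_of_le_of_lt hu12 hu2lt
  set E : ℝ := T*(1-ρ^2) with hE
  clear_value E
  have hEp : 0 < E := by rw [hE]; positivity
  set Lstar : ℝ := 2*(1-ρ)*(2+(μ1+μ2)*T) with hLs
  clear_value Lstar
  have hLsp : 0 < Lstar := by rw [hLs]; positivity
  have hV : 2/(1+ρ) * (μ1+μ2+2/T) = Lstar/E := by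
    rw [hLs, hE]; field_simp; ring
  set m : ℝ := min t s with hm
  clear_value m
  have hmp : 0 < m := by rw [hm]; exact lt_min ht hs
  set SS : ℝ := u1^2*t + 2*ρ*u1*u2*m + u2^2*s with hSS
  clear_value SS
  have hSSp : 0 < SS := by
    have hmt : m ≤ t := by rw [hm]; exact min_le_left t s
    have hms : m ≤ s := by rw [hm]; exact min_le_right t s
    have h1 : u1^2*m ≤ u1^2*t := mul_le_mul_of_nonneg_left hmt (sq_nonneg u1)
    have h2 : u2^2*m ≤ u2^2*s := mul_le_mul_of_nonneg_left hms (sq_nonneg u2)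
    have h3 : 0 < u1^2 + 2*ρ*u1*u2 + u2^2 := by nlinarith [sq_nonneg (u1-u2), mul_pos hu1p hu2p]
    have h4 := mul_pos hmp h3
    have h5 : m*(u1^2 + 2*ρ*u1*u2 + u2^2) = u1^2*m + 2*ρ*u1*u2*m + u2^2*m := by ring
    rw [hSS]; rw [h5] at h4; linarith
  set L : ℝ := (u1+u2) + u1*μ1*t + u2*μ2*s with hL
  clear_value L
  have hLp : 0 < L := by
    have h1 := mul_pos (mul_pos hu1p hμ1) ht
    have h2 := mul_pos (mul_pos hu2p hμ2) hs
    rw [hL]; nlinarith [hu1p, hu2p]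
  have hμsum : 0 < u1*μ1 + u2*μ2 := by positivity
  have hkey : Lstar * SS ≤ L^2 * E ∧ (¬(t = T ∧ s = T) → Lstar * SS < L^2 * E) := by
    rcases le_total t s with hts | hts
    · -- region t ≤ s
      have hmeq : m = t := by rw [hm]; exact min_eq_left hts
      have hSS' : SS = u1^2*t + 2*ρ*u1*u2*t + u2^2*s := by rw [hSS, hmeq]
      have hid : E*(L^2*E) - E*(Lstar*(u1^2*t + 2*ρ*u1*u2*t + u2^2*s))
          = E*(Lstar*(u1*((u1 - 2*(1-ρ^2))*(t-s)))) + (E*E)*(u1*μ1*(t-T)+u2*μ2*(s-T))^2 := by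
        rw [hL, hLs, hE, hu1, hu2]
        linear_combination ((1-ρ^2)^2*T*(4*s - 2*T + 4*μ2*T*s - 2*μ2*T^2 + 2*μ2^2*T^2*s
          - μ2^2*T^3 + 2*μ1*T*s + 2*μ1*T*t - 2*μ1*T^2 + 2*μ1^2*T^2*t - μ1^2*T^3 - 4*ρ*s
          + 2*ρ*T - 4*ρ*μ2*T*s + 2*ρ*μ2*T^2 - 2*ρ*μ1*T*s - 2*ρ*μ1*T*t + 2*ρ*μ1*T^2
          - 2*ρ*μ1*μ2*T^2*s - 2*ρ*μ1*μ2*T^2*t + 2*ρ*μ1*μ2*T^3)) * hT2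
      have hterm1 : 0 ≤ E*(Lstar*(u1*((u1 - 2*(1-ρ^2))*(t-s)))) := by
        have h0 : 0 ≤ (E*Lstar*u1) * ((2*(1-ρ^2) - u1)*(s-t)) :=
          mul_nonneg (by positivity)
            (mul_nonneg (by linarith) (by linarith))
        have hring : E*(Lstar*(u1*((u1 - 2*(1-ρ^2))*(t-s))))
            = (E*Lstar*u1) * ((2*(1-ρ^2) - u1)*(s-t)) := by ring
        rw [hring]; exact h0
      have hterm2 : 0 ≤ (E*E)*(u1*μ1*(t-T)+u2*μ2*(s-T))^2 := by positivity
      constructor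
      · have h6 : E*(Lstar*SS) ≤ E*(L^2*E) := by rw [hSS']; linarith
        exact le_of_mul_le_mul_left h6 hEp
      · intro hne
        have hstrict : E*(Lstar*SS) < E*(L^2*E) := by
          rcases eq_or_lt_of_le hts with heq | hlt
          · have htT : t ≠ T := by
              intro h; exact hne ⟨h, by rw [← heq]; exact h⟩
            have hz : u1*μ1*(t-T)+u2*μ2*(s-T) = (u1*μ1 + u2*μ2)*(t-T) := by
              rw [← heq]; ring
            have hnz : (u1*μ1 + u2*μ2)*(t-T) ≠ 0 :=
              mul_ne_zero (ne_of_gt hμsum) (sub_ne_zero.mpr htT)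
            have hpos : 0 < (E*E)*(u1*μ1*(t-T)+u2*μ2*(s-T))^2 := by
              rw [hz]
              have : 0 < ((u1*μ1 + u2*μ2)*(t-T))^2 := by positivity
              positivity
            rw [hSS']; linarith
          · have h0 : 0 < (E*Lstar*u1) * ((2*(1-ρ^2) - u1)*(s-t)) :=
              mul_pos (by positivity) (mul_pos (by linarith) (by linarith))
            have hterm1' : 0 < E*(Lstar*(u1*((u1 - 2*(1-ρ^2))*(t-s)))) := by
              have hring : E*(Lstar*(u1*((u1 - 2*(1-ρ^2))*(t-s))))
                  = (E*Lstar*u1) * ((2*(1-ρ^2) - u1)*(s-t)) := by ring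
              rw [hring]; exact h0
            rw [hSS']; linarith
        exact lt_of_mul_lt_mul_left hstrict hEp.le
    · -- region s ≤ t
      have hmeq : m = s := by rw [hm]; exact min_eq_right hts
      have hSS' : SS = u1^2*t + 2*ρ*u1*u2*s + u2^2*s := by rw [hSS, hmeq]
      have hid : E*(L^2*E) - E*(Lstar*(u1^2*t + 2*ρ*u1*u2*s + u2^2*s))
          = E*(Lstar*(u2*((u2 - 2*(1-ρ^2))*(s-t)))) + (E*E)*(u1*μ1*(t-T)+u2*μ2*(s-T))^2 := by
        rw [hL, hLs, hE, hu1, hu2]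
        linear_combination ((1-ρ^2)^2*T*(4*t - 2*T + 2*μ2*T*s + 2*μ2*T*t - 2*μ2*T^2
          + 2*μ2^2*T^2*s - μ2^2*T^3 + 4*μ1*T*t - 2*μ1*T^2 + 2*μ1^2*T^2*t - μ1^2*T^3 - 4*ρ*t
          + 2*ρ*T - 2*ρ*μ2*T*s - 2*ρ*μ2*T*t + 2*ρ*μ2*T^2 - 4*ρ*μ1*T*t + 2*ρ*μ1*T^2
          - 2*ρ*μ1*μ2*T^2*s - 2*ρ*μ1*μ2*T^2*t + 2*ρ*μ1*μ2*T^3)) * hT2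
      have hterm1 : 0 ≤ E*(Lstar*(u2*((u2 - 2*(1-ρ^2))*(s-t)))) := by
        have h0 : 0 ≤ (E*Lstar*u2) * ((2*(1-ρ^2) - u2)*(t-s)) :=
          mul_nonneg (by positivity)
            (mul_nonneg (by linarith) (by linarith))
        have hring : E*(Lstar*(u2*((u2 - 2*(1-ρ^2))*(s-t))))
            = (E*Lstar*u2) * ((2*(1-ρ^2) - u2)*(t-s)) := by ring
        rw [hring]; exact h0
      have hterm2 : 0 ≤ (E*E)*(u1*μ1*(t-T)+u2*μ2*(s-T))^2 := by positivity
      constructor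
      · have h6 : E*(Lstar*SS) ≤ E*(L^2*E) := by rw [hSS']; linarith
        exact le_of_mul_le_mul_left h6 hEp
      · intro hne
        have hstrict : E*(Lstar*SS) < E*(L^2*E) := by
          rcases eq_or_lt_of_le hts with heq | hlt
          · have htT : t ≠ T := by
              intro h; exact hne ⟨h, by rw [heq]; exact h⟩
            have hz : u1*μ1*(t-T)+u2*μ2*(s-T) = (u1*μ1 + u2*μ2)*(t-T) := by
              rw [heq]; ring
            have hnz : (u1*μ1 + u2*μ2)*(t-T) ≠ 0 :=
              mul_ne_zero (ne_of_gt hμsum) (sub_ne_zero.mpr htT)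
            have hpos : 0 < (E*E)*(u1*μ1*(t-T)+u2*μ2*(s-T))^2 := by
              rw [hz]
              have : 0 < ((u1*μ1 + u2*μ2)*(t-T))^2 := by positivity
              positivity
            rw [hSS']; linarith
          · have h0 : 0 < (E*Lstar*u2) * ((2*(1-ρ^2) - u2)*(t-s)) :=
              mul_pos (by positivity) (mul_pos (by linarith) (by linarith))
            have hterm1' : 0 < E*(Lstar*(u2*((u2 - 2*(1-ρ^2))*(s-t)))) := by
              have hring : E*(Lstar*(u2*((u2 - 2*(1-ρ^2))*(s-t))))
                  = (E*Lstar*u2) * ((2*(1-ρ^2) - u2)*(t-s)) := by ring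
              rw [hring]; exact h0
            rw [hSS']; linarith
        exact lt_of_mul_lt_mul_left hstrict hEp.le
  refine ⟨L^2/SS, ?_, ?_, ?_⟩
  · rw [hV, div_le_div_iff₀ hEp hSSp]; exact hkey.1
  · intro hne
    rw [hV, div_lt_div_iff₀ hEp hSSp]; exact hkey.2 hne
  · intro x y hx hy
    have hxp : 0 < x := lt_of_lt_of_le (by positivity) hx
    have hyp : 0 < y := lt_of_lt_of_le (by positivity) hy
    have hD : 0 < t*s - ρ^2*m^2 := by
      have hmt : m ≤ t := by rw [hm]; exact min_le_left t s
      have hms : m ≤ s := by rw [hm]; exact min_le_right t s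
      have hmm : m * m ≤ t * s := mul_le_mul hmt hms hmp.le ht.le
      have h1 : ρ^2*m^2 < 1*m^2 := mul_lt_mul_of_pos_right (by nlinarith) (by positivity)
      nlinarith
    have huv : L ≤ u1*x + u2*y := by
      have h1 := mul_le_mul_of_nonneg_left hx hu1p.le
      have h2 := mul_le_mul_of_nonneg_left hy hu2p.le
      rw [hL]; nlinarith
    have hL2 : L^2 ≤ (u1*x+u2*y)^2 := by nlinarith
    have hCS : (t*s - ρ^2*m^2) * (u1*x+u2*y)^2 ≤ (s*x^2 - 2*ρ*m*x*y + t*y^2) * SS := by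
      have hid : (s*x^2 - 2*ρ*m*x*y + t*y^2) * (u1^2*t + 2*ρ*u1*u2*m + u2^2*s)
          - (t*s - ρ^2*m^2) * (u1*x+u2*y)^2
          = (x*(ρ*m*u1 + s*u2) - y*(t*u1 + ρ*m*u2))^2 := by ring
      rw [hSS]
      nlinarith [hid, sq_nonneg (x*(ρ*m*u1 + s*u2) - y*(t*u1 + ρ*m*u2))]
    rw [le_div_iff₀ hD, div_mul_eq_mul_div, div_le_iff₀ hSSp]
    calc L^2 * (t*s - ρ^2*m^2) ≤ (u1*x+u2*y)^2 * (t*s - ρ^2*m^2) :=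
          mul_le_mul_of_nonneg_right hL2 hD.le
      _ ≤ (s*x^2 - 2*ρ*m*x*y + t*y^2) * SS := by linarith [hCS, mul_comm ((u1*x+u2*y)^2) (t*s - ρ^2*m^2)]



lemma aux1 (ρ μ1 μ2 : ℝ) (hμ1 : 0 < μ1) (hμ12 : μ1 ≤ μ2)
    (hρl : (μ1 + μ2 - Real.sqrt ((μ1 + μ2) ^ 2 - 4 * μ1 * (μ2 - μ1))) / (4 * μ1) < ρ)
    (hρu : ρ < (μ1 + μ2) / (2 * μ2)) :
    -(1/2 : ℝ) < ρ ∧ ρ < 1 ∧ 2 * μ1 * ρ^2 - (μ1 + μ2) * ρ + (μ2 - μ1) / 2 < 0 := by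
  have hμ2 : 0 < μ2 := lt_of_lt_of_le hμ1 hμ12
  have hρu' : ρ * (2 * μ2) < μ1 + μ2 := (lt_div_iff₀ (by positivity)).mp hρu
  have hρ2 : ρ < 1 := by nlinarith
  set S : ℝ := Real.sqrt ((μ1 + μ2) ^ 2 - 4 * μ1 * (μ2 - μ1)) with hSdef
  have hargS : (0:ℝ) ≤ (μ1 + μ2) ^ 2 - 4 * μ1 * (μ2 - μ1) := by nlinarith [sq_nonneg (μ2 - μ1)]
  have hS0 : 0 ≤ S := Real.sqrt_nonneg _
  have hS2 : S ^ 2 = (μ1 + μ2) ^ 2 - 4 * μ1 * (μ2 - μ1) := Real.sq_sqrt hargS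
  clear_value S
  have hρl' : μ1 + μ2 - S < ρ * (4 * μ1) := (div_lt_iff₀ (by positivity)).mp hρl
  have hSlt : S < 3 * μ1 + μ2 := by nlinarith [hS2, hS0, hμ1, hμ2]
  have hhalf : -(1/2 : ℝ) < ρ := by nlinarith [hρl', hSlt, hμ1]
  refine ⟨hhalf, hρ2, ?_⟩
  have hXS : (μ1 + μ2) * (2 * μ1 - μ2) ≤ S * μ2 := by
    have hDx : (0:ℝ) ≤ 4 * μ1^2 * ((2 * μ2 + μ1) * (μ2 - μ1)) :=
      mul_nonneg (by positivity) (mul_nonneg (by positivity) (sub_nonneg.mpr hμ12))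
    nlinarith [hS2, hDx, mul_nonneg hS0 hμ2.le, hμ2, hS0]
  have hr' : 4 * μ1 * ρ - (μ1 + μ2) < S := by nlinarith [hXS, hρu', hμ2, hμ1]
  nlinarith [mul_pos (show (0:ℝ) < S + (4 * μ1 * ρ - (μ1 + μ2)) by linarith)
    (show (0:ℝ) < S - (4 * μ1 * ρ - (μ1 + μ2)) by linarith), hS2, hμ1]

set_option maxHeartbeats 1000000 in
lemma aux2 (ρ μ1 μ2 T : ℝ) (hμ1 : 0 < μ1) (hμ12 : μ1 ≤ μ2)
    (hhalf : -(1/2 : ℝ) < ρ) (hρ2 : ρ < 1)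
    (hf : 2 * μ1 * ρ^2 - (μ1 + μ2) * ρ + (μ2 - μ1) / 2 < 0)
    (hρu' : ρ * (2 * μ2) < μ1 + μ2)
    (hT : 0 < T) (hT2 : (μ1^2 + μ2^2 - 2*ρ*μ1*μ2) * T^2 = 2*(1-ρ)) :
    0 < (1 - ρ) + (μ1 - ρ * μ2) * T ∧ (1 - ρ) + (μ2 - ρ * μ1) * T < 2 * (1 - ρ^2) := by
  have hμ2 : 0 < μ2 := lt_of_lt_of_le hμ1 hμ12
  have h1ρ : (0:ℝ) < 1 - ρ := by linarith
  have h1ρ' : (0:ℝ) < 1 + ρ := by linarith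
  have h12ρ : (0:ℝ) < 1 + 2 * ρ := by linarith
  have hA : (0:ℝ) < μ1 ^ 2 + μ2 ^ 2 - 2 * ρ * μ1 * μ2 := by
    nlinarith [mul_pos (mul_pos hμ1 hμ2) h1ρ, sq_nonneg (μ1 - μ2)]
  have hh : (0:ℝ) < (1 + ρ) * ((μ1 + μ2) - 2 * μ2 * ρ) :=
    mul_pos h1ρ' (by nlinarith)
  constructor
  · rcases le_or_gt 0 (μ1 - ρ * μ2) with hc | hc
    · nlinarith [mul_nonneg hc hT.le]
    · have hμlt : μ1 < μ2 := by nlinarith [mul_lt_mul_of_pos_right hρ2 hμ2]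
      have hGG : (0:ℝ) < (1 - ρ) * (μ1^2 + μ2^2 - 2*ρ*μ1*μ2) - 2 * (ρ * μ2 - μ1)^2 := by
        have h9 := mul_pos (sub_pos.mpr hμlt) hh
        nlinarith [h9]
      have hT2'' : (ρ * μ2 - μ1)^2 * ((μ1^2 + μ2^2 - 2*ρ*μ1*μ2) * T^2)
          = (ρ * μ2 - μ1)^2 * (2 * (1 - ρ)) := by rw [hT2]
      have hsq : ((ρ * μ2 - μ1) * T)^2 < (1 - ρ)^2 := by
        nlinarith [mul_pos h1ρ hGG, hA, hT2'']
      have hs1 : (ρ * μ2 - μ1) * T < 1 - ρ :=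
        lt_of_pow_lt_pow_left₀ 2 h1ρ.le hsq
      nlinarith [hs1]
  · have hG : (0:ℝ) < (1 - ρ) * (1 + 2 * ρ)^2 * (μ1^2 + μ2^2 - 2*ρ*μ1*μ2)
        - 2 * (μ2 - ρ * μ1)^2 := by
      have hfh := mul_pos (show (0:ℝ) < -(2 * μ1 * ρ^2 - (μ1 + μ2) * ρ + (μ2 - μ1) / 2) by
        linarith) hh
      nlinarith [hfh]
    have hT2' : (μ2 - ρ * μ1)^2 * ((μ1^2 + μ2^2 - 2*ρ*μ1*μ2) * T^2)
        = (μ2 - ρ * μ1)^2 * (2 * (1 - ρ)) := by rw [hT2]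
    have hsq : ((μ2 - ρ * μ1) * T)^2 < ((1 - ρ) * (1 + 2 * ρ))^2 := by
      nlinarith [mul_pos h1ρ hG, hA, hT2']
    have hs1 : (μ2 - ρ * μ1) * T < (1 - ρ) * (1 + 2 * ρ) :=
      lt_of_pow_lt_pow_left₀ 2 (by positivity) hsq
    nlinarith [hs1]

set_option maxHeartbeats 1000000 in
/-- If `μ₁ ≤ μ₂` and `ρ̂₁ < ρ < ρ̂₂`, with `t* = √(2(1-ρ)/(μ₁² + μ₂² - 2ρμ₁μ₂))`, then
`inf_{(t,s) ∈ (0,∞)²} g(t,s) = (2/(1+ρ))(μ₁ + μ₂ + 2/t*)`, attained at the unique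
point `(t*, t*)` on the diagonal. -/
theorem statement13 (ρ μ1 μ2 : ℝ) (hμ1 : 0 < μ1) (hμ12 : μ1 ≤ μ2)
    (hρl : (μ1 + μ2 - Real.sqrt ((μ1 + μ2) ^ 2 - 4 * μ1 * (μ2 - μ1))) / (4 * μ1) < ρ)
    (hρu : ρ < (μ1 + μ2) / (2 * μ2)) :
    IsLeast {v : ℝ | ∃ t s : ℝ, 0 < t ∧ 0 < s ∧ v = gfun ρ μ1 μ2 t s}
        (2 / (1 + ρ) *
          (μ1 + μ2 + 2 / Real.sqrt (2 * (1 - ρ) / (μ1 ^ 2 + μ2 ^ 2 - 2 * ρ * μ1 * μ2)))) ∧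
      gfun ρ μ1 μ2 (Real.sqrt (2 * (1 - ρ) / (μ1 ^ 2 + μ2 ^ 2 - 2 * ρ * μ1 * μ2)))
          (Real.sqrt (2 * (1 - ρ) / (μ1 ^ 2 + μ2 ^ 2 - 2 * ρ * μ1 * μ2))) =
        2 / (1 + ρ) *
          (μ1 + μ2 + 2 / Real.sqrt (2 * (1 - ρ) / (μ1 ^ 2 + μ2 ^ 2 - 2 * ρ * μ1 * μ2))) ∧
      ∀ t s : ℝ, 0 < t → 0 < s →
        gfun ρ μ1 μ2 t s =
            2 / (1 + ρ) *
              (μ1 + μ2 + 2 / Real.sqrt (2 * (1 - ρ) / (μ1 ^ 2 + μ2 ^ 2 - 2 * ρ * μ1 * μ2))) →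
          t = Real.sqrt (2 * (1 - ρ) / (μ1 ^ 2 + μ2 ^ 2 - 2 * ρ * μ1 * μ2)) ∧
            s = Real.sqrt (2 * (1 - ρ) / (μ1 ^ 2 + μ2 ^ 2 - 2 * ρ * μ1 * μ2)) := by
  obtain ⟨hhalf, hρ2, hf⟩ := aux1 ρ μ1 μ2 hμ1 hμ12 hρl hρu
  have hμ2 : 0 < μ2 := lt_of_lt_of_le hμ1 hμ12
  have hρu' : ρ * (2 * μ2) < μ1 + μ2 := (lt_div_iff₀ (by positivity)).mp hρu
  have hρ1 : (-1 : ℝ) < ρ := by linarith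
  have h1ρ : (0:ℝ) < 1 - ρ := by linarith
  have h1ρ' : (0:ℝ) < 1 + ρ := by linarith
  have hρsq : ρ ^ 2 < 1 := by nlinarith
  have hA : (0:ℝ) < μ1 ^ 2 + μ2 ^ 2 - 2 * ρ * μ1 * μ2 := by
    nlinarith [mul_pos (mul_pos hμ1 hμ2) h1ρ, sq_nonneg (μ1 - μ2)]
  have hargT : (0:ℝ) < 2 * (1 - ρ) / (μ1 ^ 2 + μ2 ^ 2 - 2 * ρ * μ1 * μ2) :=
    div_pos (by linarith) hA
  set T : ℝ := Real.sqrt (2 * (1 - ρ) / (μ1 ^ 2 + μ2 ^ 2 - 2 * ρ * μ1 * μ2)) with hTdef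
  have hTpos : 0 < T := Real.sqrt_pos.mpr hargT
  have hT2 : (μ1^2 + μ2^2 - 2*ρ*μ1*μ2) * T^2 = 2*(1-ρ) := by
    have h := Real.sq_sqrt hargT.le
    rw [← hTdef] at h
    rw [h]
    field_simp
    exact div_self (ne_of_gt (by linarith))
  clear_value T
  obtain ⟨hu1p, hu2lt⟩ := aux2 ρ μ1 μ2 T hμ1 hμ12 hhalf hρ2 hf hρu' hTpos hT2
  -- value of the quadratic form at the corner point of (T,T)
  have hvT : (T*(1 + μ1*T)^2 - 2*ρ*T*(1 + μ1*T)*(1 + μ2*T) + T*(1 + μ2*T)^2)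
      / (T*T - ρ^2*T^2) = 2 / (1 + ρ) * (μ1 + μ2 + 2 / T) := by
    rw [show T*(1 + μ1*T)^2 - 2*ρ*T*(1 + μ1*T)*(1 + μ2*T) + T*(1 + μ2*T)^2
        = T*(2*(1 - ρ)*(2 + (μ1 + μ2)*T)) from by linear_combination T * hT2]
    rw [show T*T - ρ^2*T^2 = T^2*(1 - ρ^2) from by ring]
    have h1 : (1:ℝ) - ρ^2 ≠ 0 := by nlinarith
    field_simp
    ring
  -- lower bounds for gfun
  have hlow : ∀ t s : ℝ, 0 < t → 0 < s →
      2 / (1 + ρ) * (μ1 + μ2 + 2 / T) ≤ gfun ρ μ1 μ2 t s := by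
    intro t s ht hs
    obtain ⟨W, hW1, _, hW3⟩ := core ρ μ1 μ2 T hμ1 hμ12 hρ1 hρ2 hTpos hT2 hu1p hu2lt t s ht hs
    refine le_trans hW1 (le_csInf ⟨_, 1 + μ1*t, 1 + μ2*s, le_refl _, le_refl _, rfl⟩ ?_)
    rintro v ⟨x, y, hx, hy, rfl⟩
    rw [quadform ρ t s ht hs hρsq x y]
    exact hW3 x y hx hy
  have hstrict : ∀ t s : ℝ, 0 < t → 0 < s → ¬(t = T ∧ s = T) →
      2 / (1 + ρ) * (μ1 + μ2 + 2 / T) < gfun ρ μ1 μ2 t s := by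
    intro t s ht hs hne
    obtain ⟨W, _, hW2, hW3⟩ := core ρ μ1 μ2 T hμ1 hμ12 hρ1 hρ2 hTpos hT2 hu1p hu2lt t s ht hs
    refine lt_of_lt_of_le (hW2 hne)
      (le_csInf ⟨_, 1 + μ1*t, 1 + μ2*s, le_refl _, le_refl _, rfl⟩ ?_)
    rintro v ⟨x, y, hx, hy, rfl⟩
    rw [quadform ρ t s ht hs hρsq x y]
    exact hW3 x y hx hy
  have hval : gfun ρ μ1 μ2 T T = 2 / (1 + ρ) * (μ1 + μ2 + 2 / T) := by
    apply IsLeast.csInf_eq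
    constructor
    · refine ⟨1 + μ1*T, 1 + μ2*T, le_refl _, le_refl _, ?_⟩
      rw [quadform ρ T T hTpos hTpos hρsq]
      rw [min_self]
      rw [← hvT]
    · obtain ⟨W, hW1, _, hW3⟩ :=
        core ρ μ1 μ2 T hμ1 hμ12 hρ1 hρ2 hTpos hT2 hu1p hu2lt T T hTpos hTpos
      rintro v ⟨x, y, hx, hy, rfl⟩
      rw [quadform ρ T T hTpos hTpos hρsq x y]
      exact le_trans hW1 (hW3 x y hx hy)
  refine ⟨⟨⟨T, T, hTpos, hTpos, hval.symm⟩, ?_⟩, hval, ?_⟩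
  · rintro v ⟨t, s, ht, hs, rfl⟩
    exact hlow t s ht hs
  · intro t s ht hs heq
    by_contra hne
    exact (ne_of_gt (hstrict t s ht hs hne)) heq
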